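/- arXiv:1805.06785 — 3 statements merged into one kernel-verified Lean document; each statement's English description precedes it below -/
import Mathlib

section
/- Let V be a real vector space, p, q positive real numbers, and F : V → V a linear map satisfying F² = id (an almost product structure). Then J₁ := (p/2)·id + ((2σ_{p,q} − p)/2)·F is a metallic structure on V, i.e., J₁² = p·J₁ + q·id. -/
/-- The (p,q)-metallic number. -/
noncomputable def metallic (p q : ℝ) : ℝ := (p + Real.sqrt (p ^ 2 + 4 * q)) / 2

theorem almostProduct_induces_metallic_fst (V : Type*) [AddCommGroup V] [Module ℝ V]
    (p q : ℝ) (hp : 0 < p) (hq : 0 < q)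
    (F : V →ₗ[ℝ] V) (hF : F ∘ₗ F = LinearMap.id) :
    letI J₁ : V →ₗ[ℝ] V :=
      (p / 2) • LinearMap.id + ((2 * metallic p q - p) / 2) • F
    J₁ ∘ₗ J₁ = p • J₁ + q • LinearMap.id := by
  have hs : Real.sqrt (p ^ 2 + 4 * q) ^ 2 = p ^ 2 + 4 * q := by
    rw [Real.sq_sqrt]; positivity
  ext x
  have hFF : F (F x) = x := LinearMap.ext_iff.mp hF x
  simp only [LinearMap.comp_apply, LinearMap.add_apply, LinearMap.smul_apply,
    LinearMap.id_apply, map_add, map_smul, hFF, metallic]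
  match_scalars <;> nlinarith [hs]
end

section
/- Let V be a real vector space, p, q positive real numbers, and F : V → V a linear map satisfying F² = id (an almost product structure). Then J₂ := (p/2)·id − ((2σ_{p,q} − p)/2)·F is a metallic structure on V, i.e., J₂² = p·J₂ + q·id. -/
theorem almostProduct_induces_metallic_snd (V : Type*) [AddCommGroup V] [Module ℝ V]
    (p q : ℝ) (hp : 0 < p) (hq : 0 < q)
    (F : V →ₗ[ℝ] V) (hF : F ∘ₗ F = LinearMap.id) :
    letI J₂ : V →ₗ[ℝ] V :=
      (p / 2) • LinearMap.id - ((2 * metallic p q - p) / 2) • F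
    J₂ ∘ₗ J₂ = p • J₂ + q • LinearMap.id := by
  have hc : ((2 * metallic p q - p) / 2) ^ 2 = p ^ 2 / 4 + q := by
    have h1 : (0:ℝ) ≤ p ^ 2 + 4 * q := by positivity
    have h2 : Real.sqrt (p ^ 2 + 4 * q) ^ 2 = p ^ 2 + 4 * q := Real.sq_sqrt h1
    unfold metallic
    nlinarith [h2]
  ext v
  have hFv : F (F v) = v := congrArg (fun f => f v) hF
  simp only [LinearMap.comp_apply, LinearMap.sub_apply, LinearMap.smul_apply,
    LinearMap.id_apply, LinearMap.add_apply, map_sub, map_smul, hFv]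
  set c := (2 * metallic p q - p) / 2 with hcdef
  have : c • (c • v) = (p ^ 2 / 4 + q) • v := by
    rw [smul_smul, ← sq, hc]
  rw [smul_sub, smul_sub, this]
  module
end

section
/- Let V be a real vector space, p, q positive real numbers, and J : V → V a linear map satisfying J² = p·J + q·id (a metallic structure). Then each of the two linear maps F = ±( (2/(2σ_{p,q} − p))·J − (p/(2σ_{p,q} − p))·id ) is an almost product structure on V, i.e., F² = id. -/
theorem metallic_induces_almostProduct (V : Type*) [AddCommGroup V] [Module ℝ V]
    (p q : ℝ) (hp : 0 < p) (hq : 0 < q)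
    (J : V →ₗ[ℝ] V) (hJ : J ∘ₗ J = p • J + q • LinearMap.id) :
    letI F : V →ₗ[ℝ] V :=
      (2 / (2 * metallic p q - p)) • J - (p / (2 * metallic p q - p)) • LinearMap.id
    F ∘ₗ F = LinearMap.id ∧ (-F) ∘ₗ (-F) = LinearMap.id := by
  have hpos : (0:ℝ) < p ^ 2 + 4 * q := by positivity
  have hs : 2 * metallic p q - p = Real.sqrt (p ^ 2 + 4 * q) := by
    unfold metallic; ring
  have hs2 : (2 * metallic p q - p) ^ 2 = p ^ 2 + 4 * q := by
    rw [hs, Real.sq_sqrt hpos.le]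
  have hsne : (2 * metallic p q - p) ≠ 0 := by
    rw [hs]; positivity
  have hJ' : ∀ v, J (J v) = p • J v + q • v := by
    intro v
    have := LinearMap.ext_iff.mp hJ v
    simpa using this
  have main : ((2 / (2 * metallic p q - p)) • J - (p / (2 * metallic p q - p)) • LinearMap.id) ∘ₗ
      ((2 / (2 * metallic p q - p)) • J - (p / (2 * metallic p q - p)) • LinearMap.id)
      = (LinearMap.id : V →ₗ[ℝ] V) := by
    ext v
    simp only [LinearMap.comp_apply, LinearMap.sub_apply, LinearMap.smul_apply,
      LinearMap.id_apply, map_sub, map_smul, hJ']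
    match_scalars
    · field_simp
      nlinarith [hs2]
    · field_simp
      nlinarith [hs2]
  refine ⟨main, ?_⟩
  rw [LinearMap.comp_neg, LinearMap.neg_comp, neg_neg, main]
end
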